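/- Let F ∈ ℕ, η > 0, L > 0, and let G = (V, E) be a directed graph on a finite vertex set that is (F+1, F+1)-robust. Let A ⊆ V with |A| ≤ F be a set of malicious adversarial nodes and R = V ∖ A the regular nodes, each regular node i holding a convex function f_i : ℝ → ℝ all of whose subgradients are bounded in magnitude by L. Suppose the regular nodes run the LF dynamics with parameter F in the malicious (broadcast) model with weights lower bounded by η, and the step-sizes α_t ≥ 0 are bounded. Define M(t) = max_{i∈R} x_i(t), m(t) = min_{i∈R} x_i(t), D(t) = M(t) − m(t), and δ_t = L · sup_{τ≥t} α_τ. Then for every t ∈ ℕ, D(t + |R|) ≤ (1 − η^{|R|}/2) · D(t) + 2|R| δ_t. -/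

import Mathlib

open Filter
open scoped Classical

/-- The in-neighborhood of `v` in the directed graph with edge relation `E`
(`E u v` means there is an edge from `u` to `v`). -/
noncomputable def NIn {V : Type*} [Fintype V] (E : V → V → Prop) (v : V) : Finset V :=
  Finset.univ.filter (fun u => E u v)

/-- A set `S` is `r`-reachable if some vertex of `S` has at least `r` in-neighbors outside `S`. -/
def RReachable {V : Type*} [Fintype V] (E : V → V → Prop) (r : ℕ) (S : Finset V) : Prop :=
  ∃ v ∈ S, r ≤ ((NIn E v) \ S).card

/-- A directed graph is `r`-robust if for every pair of disjoint nonempty vertex subsets,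
at least one of them is `r`-reachable. -/
def RRobust {V : Type*} [Fintype V] (E : V → V → Prop) (r : ℕ) : Prop :=
  ∀ S₁ S₂ : Finset V, S₁.Nonempty → S₂.Nonempty → Disjoint S₁ S₂ →
    RReachable E r S₁ ∨ RReachable E r S₂

/-- A directed graph is `(r,s)`-robust if for every pair of disjoint nonempty vertex
subsets `S₁, S₂`, either every node of `S₁` has at least `r` in-neighbors outside `S₁`,
or every node of `S₂` has at least `r` in-neighbors outside `S₂`, or at least `s` nodes
of `S₁ ∪ S₂` have at least `r` in-neighbors outside their respective sets. -/
def RSRobust {V : Type*} [Fintype V] (E : V → V → Prop) (r s : ℕ) : Prop :=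
  ∀ S₁ S₂ : Finset V, S₁.Nonempty → S₂.Nonempty → Disjoint S₁ S₂ →
    (∀ v ∈ S₁, r ≤ ((NIn E v) \ S₁).card) ∨
    (∀ v ∈ S₂, r ≤ ((NIn E v) \ S₂).card) ∨
    s ≤ ((S₁.filter (fun v => r ≤ ((NIn E v) \ S₁).card)) ∪
         (S₂.filter (fun v => r ≤ ((NIn E v) \ S₂).card))).card

/-- `d` is a subgradient of `f` at `x`. -/
def IsSubgradient (f : ℝ → ℝ) (x d : ℝ) : Prop :=
  ∀ y, f x + d * (y - x) ≤ f y

/-- All subgradients of `f` are bounded in magnitude by `L`. -/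
def HasBoundedSubgradients (f : ℝ → ℝ) (L : ℝ) : Prop :=
  ∀ x d, IsSubgradient f x d → |d| ≤ L

/-- `J` is an admissible LF-retained set with parameter `F` for the values `ξ` on the
in-neighborhood `N`, relative to the node's own value `xi`:  `J = N \ (H ∪ L)` where `H`
consists of (at most) the `F` largest received values strictly greater than `xi` (all of
them if there are fewer than `F`), and symmetrically `L` consists of (at most) the `F`
smallest received values strictly less than `xi`. -/
def IsLFRetained {ι : Type*} [DecidableEq ι] (F : ℕ) (N : Finset ι) (ξ : ι → ℝ)
    (xi : ℝ) (J : Finset ι) : Prop :=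
  ∃ H L : Finset ι,
    J = N \ (H ∪ L) ∧
    H ⊆ N.filter (fun j => xi < ξ j) ∧
    (∀ j ∈ H, ∀ k ∈ (N.filter (fun j => xi < ξ j)) \ H, ξ k ≤ ξ j) ∧
    ((N.filter (fun j => xi < ξ j)).card ≤ F → H = N.filter (fun j => xi < ξ j)) ∧
    (F < (N.filter (fun j => xi < ξ j)).card → H.card = F) ∧
    L ⊆ N.filter (fun j => ξ j < xi) ∧
    (∀ j ∈ L, ∀ k ∈ (N.filter (fun j => ξ j < xi)) \ L, ξ j ≤ ξ k) ∧
    ((N.filter (fun j => ξ j < xi)).card ≤ F → L = N.filter (fun j => ξ j < xi)) ∧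
    (F < (N.filter (fun j => ξ j < xi)).card → L.card = F)

/-- The LF dynamics with parameter `F` in the malicious (broadcast) model: at each
time-step, each regular node `i ∈ R` filters the values of its in-neighbors (the same
broadcast values `x t j` for all receivers), forms a convex combination of its own value
and the retained values with weights lower bounded by `η`, and takes a subgradient step
of its local function `f i` with step-size `α t`. -/
def LFMalicious {V : Type*} [Fintype V] [DecidableEq V] (E : V → V → Prop) (F : ℕ)
    (η : ℝ) (R : Finset V) (f : V → ℝ → ℝ) (α : ℕ → ℝ) (x : ℕ → V → ℝ) : Prop :=
  ∀ t : ℕ, ∀ i ∈ R, ∃ (J : Finset V) (a : V → ℝ) (d : ℝ),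
    IsLFRetained F (NIn E i) (x t) (x t i) J ∧
    (∀ j ∈ insert i J, η ≤ a j) ∧
    a i + ∑ j ∈ J, a j = 1 ∧
    IsSubgradient (f i) (a i * x t i + ∑ j ∈ J, a j * x t j) d ∧
    x (t + 1) i = (a i * x t i + ∑ j ∈ J, a j * x t j) - α t * d

/-- The LF dynamics with parameter `F` in the Byzantine model: `χ t i j` is the value
received by node `i` from its in-neighbor `j` at time `t` (equal to the true state
`x t j` whenever `j` is regular, arbitrary otherwise); each regular node filters the
received values, forms a convex combination with weights lower bounded by `η`, and takes
a subgradient step of its local function. -/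
def LFByzantine {V : Type*} [Fintype V] [DecidableEq V] (E : V → V → Prop) (F : ℕ)
    (η : ℝ) (R : Finset V) (f : V → ℝ → ℝ) (α : ℕ → ℝ) (x : ℕ → V → ℝ)
    (χ : ℕ → V → V → ℝ) : Prop :=
  (∀ t : ℕ, ∀ i ∈ R, ∀ j ∈ R, χ t i j = x t j) ∧
  ∀ t : ℕ, ∀ i ∈ R, ∃ (J : Finset V) (a : V → ℝ) (d : ℝ),
    IsLFRetained F (NIn E i) (χ t i) (x t i) J ∧
    (∀ j ∈ insert i J, η ≤ a j) ∧
    a i + ∑ j ∈ J, a j = 1 ∧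
    IsSubgradient (f i) (a i * x t i + ∑ j ∈ J, a j * χ t i j) d ∧
    x (t + 1) i = (a i * x t i + ∑ j ∈ J, a j * χ t i j) - α t * d

section Aux
variable {V : Type*} [DecidableEq V]

lemma lfret_neg {F : ℕ} {N : Finset V} {ξ : V → ℝ} {xi : ℝ} {J : Finset V}
    (h : IsLFRetained F N ξ xi J) :
    IsLFRetained F N (fun j => -ξ j) (-xi) J := by
  obtain ⟨H, L, hJ, hHs, hHm, hHa, hHc, hLs, hLm, hLa, hLc⟩ := h
  have hf1 : (N.filter fun j => -xi < -ξ j) = N.filter fun j => ξ j < xi := by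
    ext u; simp only [Finset.mem_filter]
    constructor <;> rintro ⟨h1, h2⟩ <;> exact ⟨h1, by linarith⟩
  have hf2 : (N.filter fun j => -ξ j < -xi) = N.filter fun j => xi < ξ j := by
    ext u; simp only [Finset.mem_filter]
    constructor <;> rintro ⟨h1, h2⟩ <;> exact ⟨h1, by linarith⟩
  refine ⟨L, H, by rw [hJ, Finset.union_comm], ?_, ?_, ?_, ?_, ?_, ?_, ?_, ?_⟩
  · rw [hf1]; exact hLs
  · rw [hf1]; intro j hj k hk; have := hLm j hj k hk; simpa using this
  · rw [hf1]; exact hLa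
  · rw [hf1]; exact hLc
  · rw [hf2]; exact hHs
  · rw [hf2]; intro j hj k hk; have := hHm j hj k hk; simpa using this
  · rw [hf2]; exact hHa
  · rw [hf2]; exact hHc

lemma retained_le [Fintype V] {F : ℕ} {A N J : Finset V} {ξ : V → ℝ} {xi W : ℝ}
    (hA : A.card ≤ F) (hxi : xi ≤ W) (hreg : ∀ u, W < ξ u → u ∈ A)
    (h : IsLFRetained F N ξ xi J) : ∀ j ∈ J, ξ j ≤ W := by
  obtain ⟨H, L, hJ, hHs, hHm, hHa, hHc, hLs, hLm, hLa, hLc⟩ := h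
  intro j hj
  by_contra hc
  push_neg at hc
  rw [hJ, Finset.mem_sdiff, Finset.mem_union] at hj
  obtain ⟨hjN, hjHL⟩ := hj
  push_neg at hjHL
  have hjf : j ∈ N.filter fun k => xi < ξ k :=
    Finset.mem_filter.mpr ⟨hjN, lt_of_le_of_lt hxi hc⟩
  rcases le_or_gt (N.filter fun k => xi < ξ k).card F with hle | hgt
  · exact hjHL.1 (by rw [hHa hle]; exact hjf)
  · have hHcard := hHc hgt
    have hsub : insert j H ⊆ A := by
      intro u hu
      rcases Finset.mem_insert.mp hu with rfl | hu
      · exact hreg _ hc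
      · have := hHm u hu j (Finset.mem_sdiff.mpr ⟨hjf, hjHL.1⟩)
        exact hreg _ (lt_of_lt_of_le hc this)
    have h1 : F + 1 ≤ A.card := by
      have hcard : (insert j H).card = F + 1 := by
        rw [Finset.card_insert_of_notMem hjHL.1, hHcard]
      calc F + 1 = (insert j H).card := hcard.symm
        _ ≤ A.card := Finset.card_le_card hsub
    omega

lemma retained_meet {F : ℕ} {N J T : Finset V} {ξ : V → ℝ} {xi : ℝ}
    (h : IsLFRetained F N ξ xi J) (hTN : T ⊆ N) (hTc : F + 1 ≤ T.card)
    (hTlt : ∀ u ∈ T, ξ u < xi) : ∃ j ∈ T, j ∈ J := by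
  obtain ⟨H, L, hJ, hHs, hHm, hHa, hHc, hLs, hLm, hLa, hLc⟩ := h
  have hLcard : L.card ≤ F := by
    rcases le_or_gt (N.filter fun k => ξ k < xi).card F with hle | hgt
    · rw [hLa hle]; exact hle
    · rw [hLc hgt]
  have hns : ¬ T ⊆ L := by
    intro hTL; have := Finset.card_le_card hTL; omega
  obtain ⟨j, hjT, hjL⟩ := Finset.not_subset.mp hns
  refine ⟨j, hjT, ?_⟩
  rw [hJ, Finset.mem_sdiff, Finset.mem_union]
  refine ⟨hTN hjT, ?_⟩
  rintro (hjH | hjH)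
  · have hm := hHs hjH
    rw [Finset.mem_filter] at hm
    exact absurd hm.2 (not_lt.mpr (hTlt j hjT).le)
  · exact hjL hjH

lemma combo_le {i : V} {J : Finset V} {a xv : V → ℝ} {η U W : ℝ}
    (hη : 0 < η)
    (hwt : ∀ j ∈ insert i J, η ≤ a j) (hsum : a i + ∑ j ∈ J, a j = 1)
    (hiW : xv i ≤ W) (hJW : ∀ j ∈ J, xv j ≤ W) (hUW : U ≤ W)
    (hspec : xv i ≤ U ∨ ∃ j ∈ J, xv j ≤ U) :
    a i * xv i + ∑ j ∈ J, a j * xv j ≤ η * U + (1 - η) * W := by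
  have hai : η ≤ a i := hwt i (Finset.mem_insert_self i J)
  have haj : ∀ j ∈ J, 0 ≤ a j := fun j hj => hη.le.trans (hwt j (Finset.mem_insert_of_mem hj))
  rcases hspec with hown | ⟨j₀, hj₀, hj₀U⟩
  · have h1 : ∑ j ∈ J, a j * xv j ≤ (∑ j ∈ J, a j) * W := by
      rw [Finset.sum_mul]
      exact Finset.sum_le_sum fun j hj => mul_le_mul_of_nonneg_left (hJW j hj) (haj j hj)
    have h3 : (∑ j ∈ J, a j) = 1 - a i := by linarith
    rw [h3] at h1
    have h2 : a i * xv i ≤ a i * U := mul_le_mul_of_nonneg_left hown (hη.le.trans hai)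
    nlinarith [mul_nonneg (sub_nonneg.mpr hai) (sub_nonneg.mpr hUW)]
  · have hajη : η ≤ a j₀ := hwt j₀ (Finset.mem_insert_of_mem hj₀)
    have hsplit : a j₀ * xv j₀ + ∑ j ∈ J.erase j₀, a j * xv j = ∑ j ∈ J, a j * xv j :=
      Finset.add_sum_erase J (fun j => a j * xv j) hj₀
    have hsplit2 : a j₀ + ∑ j ∈ J.erase j₀, a j = ∑ j ∈ J, a j :=
      Finset.add_sum_erase J (fun j => a j) hj₀
    have h1 : ∑ j ∈ J.erase j₀, a j * xv j ≤ (∑ j ∈ J.erase j₀, a j) * W := by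
      rw [Finset.sum_mul]
      exact Finset.sum_le_sum fun j hj =>
        mul_le_mul_of_nonneg_left (hJW j (Finset.mem_of_mem_erase hj)) (haj j (Finset.mem_of_mem_erase hj))
    have h2 : a i * xv i ≤ a i * W := mul_le_mul_of_nonneg_left hiW (hη.le.trans hai)
    have h4 : a j₀ * xv j₀ ≤ a j₀ * U := mul_le_mul_of_nonneg_left hj₀U (hη.le.trans hajη)
    have h5 : a i + (a j₀ + ∑ j ∈ J.erase j₀, a j) = 1 := by rw [hsplit2]; exact hsum
    have h6 : (∑ j ∈ J.erase j₀, a j) * W = (1 - a i - a j₀) * W := by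
      have : (∑ j ∈ J.erase j₀, a j) = 1 - a i - a j₀ := by linarith
      rw [this]
    rw [h6] at h1
    nlinarith [mul_nonneg (sub_nonneg.mpr hajη) (sub_nonneg.mpr hUW)]

end Aux

/-- The contraction estimate for LF dynamics under `F`-total malicious adversaries in
`(F+1,F+1)`-robust networks: with `M(t), m(t)` the max/min regular value, `D = M − m`,
and `δ_t = L · sup_{τ≥t} α_τ`, one has
`D(t + |R|) ≤ (1 − η^{|R|}/2) D(t) + 2|R| δ_t` for every `t`. -/
theorem stmt13 {V : Type*} [Fintype V] [DecidableEq V] (F : ℕ) (η L : ℝ)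
    (hη : 0 < η) (hL : 0 < L) (E : V → V → Prop)
    (hrobust : RSRobust E (F + 1) (F + 1))
    (A : Finset V) (hA : A.card ≤ F)
    (hR : (Aᶜ : Finset V).Nonempty)
    (f : V → ℝ → ℝ)
    (hconv : ∀ i ∈ (Aᶜ : Finset V), ConvexOn ℝ Set.univ (f i))
    (hbdd : ∀ i ∈ (Aᶜ : Finset V), HasBoundedSubgradients (f i) L)
    (α : ℕ → ℝ) (hα0 : ∀ t, 0 ≤ α t) (hαbdd : ∃ C, ∀ t, α t ≤ C)
    (x : ℕ → V → ℝ)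
    (hdyn : LFMalicious E F η Aᶜ f α x) :
    ∀ t : ℕ,
      (Aᶜ : Finset V).sup' hR (x (t + (Aᶜ : Finset V).card)) -
          (Aᶜ : Finset V).inf' hR (x (t + (Aᶜ : Finset V).card)) ≤
        (1 - η ^ (Aᶜ : Finset V).card / 2) *
            ((Aᶜ : Finset V).sup' hR (x t) - (Aᶜ : Finset V).inf' hR (x t)) +
          2 * ((Aᶜ : Finset V).card : ℝ) * (L * ⨆ τ : ℕ, α (t + τ)) := by
  intro t
  set R : Finset V := Aᶜ with hRdef
  set n : ℕ := R.card with hndef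
  set σ : ℝ := ⨆ τ : ℕ, α (t + τ) with hσdef
  set M0 : ℝ := R.sup' hR (x t) with hM0
  set m0 : ℝ := R.inf' hR (x t) with hm0
  obtain ⟨C, hC⟩ := hαbdd
  have hbdda : BddAbove (Set.range fun τ : ℕ => α (t + τ)) :=
    ⟨C, by rintro y ⟨τ, rfl⟩; exact hC _⟩
  have hσle : ∀ s : ℕ, α (t + s) ≤ σ := fun s => le_ciSup hbdda s
  have hσ0 : 0 ≤ σ := le_trans (hα0 (t + 0)) (hσle 0)
  have hδ0 : 0 ≤ L * σ := mul_nonneg hL.le hσ0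
  have hη1 : η ≤ 1 := by
    obtain ⟨i₀, hi₀⟩ := hR
    obtain ⟨J, a, d, -, hwt, hsum, -, -⟩ := hdyn 0 i₀ hi₀
    have h1 : η ≤ a i₀ := hwt _ (Finset.mem_insert_self _ _)
    have h2 : 0 ≤ ∑ j ∈ J, a j :=
      Finset.sum_nonneg fun j hj => hη.le.trans (hwt j (Finset.mem_insert_of_mem hj))
    linarith
  have hD0 : 0 ≤ M0 - m0 := by
    obtain ⟨i₀, hi₀⟩ := hR
    exact sub_nonneg.mpr ((Finset.inf'_le _ hi₀).trans (Finset.le_sup' _ hi₀))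
  have hmemR : ∀ u : V, u ∉ A → u ∈ R := fun u hu => Finset.mem_compl.mpr hu
  -- one-step upper bound
  have hstep_ub : ∀ (s : ℕ) (W U' : ℝ), U' ≤ W →
      (∀ i ∈ R, x (t + s) i ≤ W) →
      ∀ i ∈ R,
        (x (t + s) i ≤ U' ∨
          F + 1 ≤ ((NIn E i) \ (Finset.univ.filter fun j => U' < x (t + s) j)).card) →
        x (t + s + 1) i ≤ η * U' + (1 - η) * W + L * σ := by
    intro s W U' hUW hall i hi hcase
    obtain ⟨J, a, d, hret, hwt, hsum, hsub, hupd⟩ := hdyn (t + s) i hi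
    have hiW : x (t + s) i ≤ W := hall i hi
    have hJW : ∀ j ∈ J, x (t + s) j ≤ W := by
      refine retained_le hA hiW ?_ hret
      intro u hu
      by_contra hc
      exact absurd (hall u (hmemR u hc)) (not_le.mpr hu)
    have hz : a i * x (t + s) i + ∑ j ∈ J, a j * x (t + s) j ≤ η * U' + (1 - η) * W := by
      refine combo_le hη hwt hsum hiW hJW hUW ?_
      rcases hcase with h | h
      · exact Or.inl h
      · by_cases hxi : x (t + s) i ≤ U'
        · exact Or.inl hxi
        · push_neg at hxi
          have hvals : ∀ u ∈ (NIn E i) \ (Finset.univ.filter fun j => U' < x (t + s) j),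
              x (t + s) u < x (t + s) i := by
            intro u hu
            rw [Finset.mem_sdiff, Finset.mem_filter] at hu
            push_neg at hu
            exact lt_of_le_of_lt (hu.2 (Finset.mem_univ u)) hxi
          obtain ⟨j, hjT, hjJ⟩ := retained_meet hret Finset.sdiff_subset h hvals
          refine Or.inr ⟨j, hjJ, ?_⟩
          rw [Finset.mem_sdiff, Finset.mem_filter] at hjT
          push_neg at hjT
          exact hjT.2 (Finset.mem_univ j)
    have hdL : |d| ≤ L := hbdd i hi _ d hsub
    have h1 : -(α (t + s) * d) ≤ α (t + s) * |d| := by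
      rw [← mul_neg]
      exact mul_le_mul_of_nonneg_left (neg_le_abs d) (hα0 _)
    have h2 : α (t + s) * |d| ≤ σ * L := mul_le_mul (hσle s) hdL (abs_nonneg d) hσ0
    rw [hupd]
    nlinarith [hz, h1, h2]
  -- one-step lower bound
  have hstep_lb : ∀ (s : ℕ) (W' Λ' : ℝ), W' ≤ Λ' →
      (∀ i ∈ R, W' ≤ x (t + s) i) →
      ∀ i ∈ R,
        (Λ' ≤ x (t + s) i ∨
          F + 1 ≤ ((NIn E i) \ (Finset.univ.filter fun j => x (t + s) j < Λ')).card) →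
        η * Λ' + (1 - η) * W' - L * σ ≤ x (t + s + 1) i := by
    intro s W' Λ' hWΛ hall i hi hcase
    obtain ⟨J, a, d, hret, hwt, hsum, hsub, hupd⟩ := hdyn (t + s) i hi
    have hretn := lfret_neg hret
    have hiW : -x (t + s) i ≤ -W' := neg_le_neg (hall i hi)
    have hJW : ∀ j ∈ J, -x (t + s) j ≤ -W' := by
      refine retained_le (ξ := fun u => -x (t + s) u) hA hiW ?_ hretn
      intro u hu
      by_contra hc
      have := hall u (hmemR u hc)
      simp only [neg_lt_neg_iff] at hu
      linarith
    have hz : a i * (-x (t + s) i) + ∑ j ∈ J, a j * (-x (t + s) j) ≤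
        η * (-Λ') + (1 - η) * (-W') := by
      refine combo_le (xv := fun u => -x (t + s) u) hη hwt hsum hiW hJW (by linarith) ?_
      rcases hcase with h | h
      · exact Or.inl (neg_le_neg h)
      · by_cases hxi : Λ' ≤ x (t + s) i
        · exact Or.inl (neg_le_neg hxi)
        · push_neg at hxi
          have hvals : ∀ u ∈ (NIn E i) \ (Finset.univ.filter fun j => x (t + s) j < Λ'),
              -x (t + s) u < -x (t + s) i := by
            intro u hu
            rw [Finset.mem_sdiff, Finset.mem_filter] at hu
            push_neg at hu
            have := hu.2 (Finset.mem_univ u)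
            simp only [neg_lt_neg_iff]
            linarith
          obtain ⟨j, hjT, hjJ⟩ := retained_meet hretn Finset.sdiff_subset h hvals
          refine Or.inr ⟨j, hjJ, ?_⟩
          rw [Finset.mem_sdiff, Finset.mem_filter] at hjT
          push_neg at hjT
          have := hjT.2 (Finset.mem_univ j)
          simp only [neg_le_neg_iff]
          linarith
    have hzz : η * Λ' + (1 - η) * W' ≤ a i * x (t + s) i + ∑ j ∈ J, a j * x (t + s) j := by
      have hs1 : ∑ j ∈ J, a j * (-x (t + s) j) = -∑ j ∈ J, a j * x (t + s) j := by
        rw [← Finset.sum_neg_distrib]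
        exact Finset.sum_congr rfl fun j _ => by ring
      have hs2 : a i * (-x (t + s) i) = -(a i * x (t + s) i) := by ring
      rw [hs1, hs2] at hz
      linarith
    have hdL : |d| ≤ L := hbdd i hi _ d hsub
    have h1 : α (t + s) * d ≤ α (t + s) * |d| :=
      mul_le_mul_of_nonneg_left (le_abs_self d) (hα0 _)
    have h2 : α (t + s) * |d| ≤ σ * L := mul_le_mul (hσle s) hdL (abs_nonneg d) hσ0
    rw [hupd]
    nlinarith [hzz, h1, h2]
  -- sup/inf evolution
  have hsup_step : ∀ s : ℕ, R.sup' hR (x (t + s + 1)) ≤ R.sup' hR (x (t + s)) + L * σ := by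
    intro s
    apply Finset.sup'_le
    intro i hi
    have h := hstep_ub s (R.sup' hR (x (t + s))) (R.sup' hR (x (t + s))) le_rfl
      (fun j hj => Finset.le_sup' _ hj) i hi (Or.inl (Finset.le_sup' _ hi))
    nlinarith [h]
  have hinf_step : ∀ s : ℕ, R.inf' hR (x (t + s)) - L * σ ≤ R.inf' hR (x (t + s + 1)) := by
    intro s
    apply Finset.le_inf'
    intro i hi
    have h := hstep_lb s (R.inf' hR (x (t + s))) (R.inf' hR (x (t + s))) le_rfl
      (fun j hj => Finset.inf'_le _ hj) i hi (Or.inl (Finset.inf'_le _ hi))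
    nlinarith [h]
  have hsup_iter : ∀ s k : ℕ,
      R.sup' hR (x (t + s + k)) ≤ R.sup' hR (x (t + s)) + (k : ℝ) * (L * σ) := by
    intro s k
    induction k with
    | zero => simp
    | succ k ih =>
      have h1 := hsup_step (s + k)
      rw [← Nat.add_assoc] at h1
      have h2 : t + s + (k + 1) = t + s + k + 1 := rfl
      rw [h2]
      push_cast
      linarith
  have hinf_iter : ∀ s k : ℕ,
      R.inf' hR (x (t + s)) - (k : ℝ) * (L * σ) ≤ R.inf' hR (x (t + s + k)) := by
    intro s k
    induction k with
    | zero => simp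
    | succ k ih =>
      have h1 := hinf_step (s + k)
      rw [← Nat.add_assoc] at h1
      have h2 : t + s + (k + 1) = t + s + k + 1 := rfl
      rw [h2]
      push_cast
      linarith
  -- thresholds
  set U : ℕ → ℝ := fun s => M0 - η ^ s * ((M0 - m0) / 2) + (s : ℝ) * (L * σ) with hUdef
  set B : ℕ → ℝ := fun s => m0 + η ^ s * ((M0 - m0) / 2) - (s : ℝ) * (L * σ) with hBdef
  have hpow0 : ∀ s : ℕ, 0 ≤ η ^ s := fun s => pow_nonneg hη.le s
  have hpow1 : ∀ s : ℕ, η ^ s ≤ 1 := fun s => pow_le_one₀ hη.le hη1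
  have hBU : ∀ s : ℕ, B s ≤ U s := by
    intro s
    simp only [hUdef, hBdef]
    nlinarith [mul_nonneg (Nat.cast_nonneg s : (0:ℝ) ≤ (s:ℝ)) hδ0,
      mul_le_mul_of_nonneg_right (hpow1 s) hD0]
  have hUW : ∀ s : ℕ, U s ≤ M0 + (s : ℝ) * (L * σ) := by
    intro s
    simp only [hUdef]
    nlinarith [mul_nonneg (hpow0 s) hD0]
  have hBW : ∀ s : ℕ, m0 - (s : ℝ) * (L * σ) ≤ B s := by
    intro s
    simp only [hBdef]
    nlinarith [mul_nonneg (hpow0 s) hD0]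
  have hallW : ∀ s : ℕ, ∀ i ∈ R, x (t + s) i ≤ M0 + (s : ℝ) * (L * σ) := by
    intro s i hi
    have h := hsup_iter 0 s
    rw [Nat.add_zero] at h
    exact le_trans (Finset.le_sup' _ hi) h
  have hallW' : ∀ s : ℕ, ∀ i ∈ R, m0 - (s : ℝ) * (L * σ) ≤ x (t + s) i := by
    intro s i hi
    have h := hinf_iter 0 s
    rw [Nat.add_zero] at h
    exact le_trans h (Finset.inf'_le _ hi)
  have hUstep : ∀ s : ℕ, η * U s + (1 - η) * (M0 + (s : ℝ) * (L * σ)) + L * σ ≤ U (s + 1) := by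
    intro s
    simp only [hUdef]
    apply le_of_eq
    push_cast
    rw [pow_succ]
    ring
  have hBstep : ∀ s : ℕ, B (s + 1) ≤ η * B s + (1 - η) * (m0 - (s : ℝ) * (L * σ)) - L * σ := by
    intro s
    simp only [hBdef]
    apply le_of_eq
    push_cast
    rw [pow_succ]
    ring
  have key_top : ∀ s : ℕ, ∀ i ∈ R,
      (x (t + s) i ≤ U s ∨
        F + 1 ≤ ((NIn E i) \ (Finset.univ.filter fun j => U s < x (t + s) j)).card) →
      x (t + s + 1) i ≤ U (s + 1) := by
    intro s i hi hc
    have h := hstep_ub s (M0 + (s : ℝ) * (L * σ)) (U s) (hUW s) (hallW s) i hi hc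
    linarith [hUstep s]
  have key_bot : ∀ s : ℕ, ∀ i ∈ R,
      (B s ≤ x (t + s) i ∨
        F + 1 ≤ ((NIn E i) \ (Finset.univ.filter fun j => x (t + s) j < B s)).card) →
      B (s + 1) ≤ x (t + s + 1) i := by
    intro s i hi hc
    have h := hstep_lb s (m0 - (s : ℝ) * (L * σ)) (B s) (hBW s) (hallW' s) i hi hc
    linarith [hBstep s]
  -- counting sets
  set RT : ℕ → Finset V := fun s => R.filter fun i => U s < x (t + s) i with hRTdef
  set RB : ℕ → Finset V := fun s => R.filter fun i => x (t + s) i < B s with hRBdef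
  have hRTmono : ∀ s, RT (s + 1) ⊆ RT s := by
    intro s i hi
    simp only [hRTdef, Finset.mem_filter] at hi ⊢
    refine ⟨hi.1, ?_⟩
    by_contra hc
    push_neg at hc
    exact absurd (key_top s i hi.1 (Or.inl hc)) (not_le.mpr hi.2)
  have hRBmono : ∀ s, RB (s + 1) ⊆ RB s := by
    intro s i hi
    simp only [hRBdef, Finset.mem_filter] at hi ⊢
    refine ⟨hi.1, ?_⟩
    by_contra hc
    push_neg at hc
    exact absurd (key_bot s i hi.1 (Or.inl hc)) (not_le.mpr hi.2)
  have hRTRBdisj : ∀ s, Disjoint (RT s) (RB s) := by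
    intro s
    rw [Finset.disjoint_left]
    intro i hi1 hi2
    simp only [hRTdef, Finset.mem_filter] at hi1
    simp only [hRBdef, Finset.mem_filter] at hi2
    linarith [hBU s, hi1.2, hi2.2]
  have hdecr : ∀ s, (RT s).Nonempty → (RB s).Nonempty →
      (RT (s + 1)).card + (RB (s + 1)).card + 1 ≤ (RT s).card + (RB s).card := by
    intro s hTne hBne
    have hZTne : (Finset.univ.filter fun j => U s < x (t + s) j).Nonempty := by
      obtain ⟨i, hi⟩ := hTne
      simp only [hRTdef, Finset.mem_filter] at hi
      exact ⟨i, Finset.mem_filter.mpr ⟨Finset.mem_univ i, hi.2⟩⟩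
    have hZBne : (Finset.univ.filter fun j => x (t + s) j < B s).Nonempty := by
      obtain ⟨i, hi⟩ := hBne
      simp only [hRBdef, Finset.mem_filter] at hi
      exact ⟨i, Finset.mem_filter.mpr ⟨Finset.mem_univ i, hi.2⟩⟩
    have hdisj : Disjoint (Finset.univ.filter fun j => U s < x (t + s) j)
        (Finset.univ.filter fun j => x (t + s) j < B s) := by
      rw [Finset.disjoint_left]
      intro i hi1 hi2
      rw [Finset.mem_filter] at hi1 hi2
      linarith [hBU s, hi1.2, hi2.2]
    have hsd : ∀ s₁ s₂ : Finset V,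
        (@SDiff.sdiff (Finset V)
          (@Finset.instSDiff V (fun a b => Classical.propDecidable (a = b))) s₁ s₂) = s₁ \ s₂ := by
      intro s₁ s₂
      ext u
      simp [Finset.mem_sdiff]
    have hun : ∀ s₁ s₂ : Finset V,
        (@Union.union (Finset V)
          (@Finset.instUnion V (fun a b => Classical.propDecidable (a = b))) s₁ s₂) = s₁ ∪ s₂ := by
      intro s₁ s₂
      ext u
      simp [Finset.mem_union]
    obtain ⟨i, hiR, hikey⟩ :
        ∃ i, i ∈ R ∧
          ((i ∈ RT s ∧
              F + 1 ≤ ((NIn E i) \ (Finset.univ.filter fun j => U s < x (t + s) j)).card) ∨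
            (i ∈ RB s ∧
              F + 1 ≤ ((NIn E i) \ (Finset.univ.filter fun j => x (t + s) j < B s)).card)) := by
      rcases hrobust _ _ hZTne hZBne hdisj with hcase | hcase | hcase
      · obtain ⟨i, hi⟩ := hTne
        have hi' := hi
        simp only [hRTdef, Finset.mem_filter] at hi'
        have h := hcase i (Finset.mem_filter.mpr ⟨Finset.mem_univ i, hi'.2⟩)
        rw [hsd] at h
        exact ⟨i, hi'.1, Or.inl ⟨hi, h⟩⟩
      · obtain ⟨i, hi⟩ := hBne
        have hi' := hi
        simp only [hRBdef, Finset.mem_filter] at hi'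
        have h := hcase i (Finset.mem_filter.mpr ⟨Finset.mem_univ i, hi'.2⟩)
        rw [hsd] at h
        exact ⟨i, hi'.1, Or.inr ⟨hi, h⟩⟩
      · have hgen : ∀ s' : Finset V, F + 1 ≤ s'.card → ∃ v ∈ s', v ∉ A := by
          intro s' hs'
          by_contra hcon
          push_neg at hcon
          have := Finset.card_le_card hcon
          omega
        rw [hun] at hcase
        obtain ⟨v, hv, hvA⟩ := hgen _ hcase
        have hvR : v ∈ R := hmemR v hvA
        rw [Finset.mem_union] at hv
        rcases hv with hv' | hv'
        · rw [Finset.mem_filter] at hv'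
          have hvZT := hv'.1
          rw [Finset.mem_filter] at hvZT
          have h := hv'.2
          rw [hsd] at h
          refine ⟨v, hvR, Or.inl ⟨?_, h⟩⟩
          simp only [hRTdef, Finset.mem_filter]
          exact ⟨hvR, hvZT.2⟩
        · rw [Finset.mem_filter] at hv'
          have hvZB := hv'.1
          rw [Finset.mem_filter] at hvZB
          have h := hv'.2
          rw [hsd] at h
          refine ⟨v, hvR, Or.inr ⟨?_, h⟩⟩
          simp only [hRBdef, Finset.mem_filter]
          exact ⟨hvR, hvZB.2⟩
    rcases hikey with ⟨hiT, hic⟩ | ⟨hiB, hic⟩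
    · have hnot : i ∉ RT (s + 1) := by
        simp only [hRTdef, Finset.mem_filter, not_and]
        intro _
        exact not_lt.mpr (key_top s i hiR (Or.inr hic))
      have hsubT : RT (s + 1) ⊆ (RT s).erase i := fun j hj =>
        Finset.mem_erase.mpr ⟨fun he => hnot (he ▸ hj), hRTmono s hj⟩
      have h1 := Finset.card_le_card hsubT
      rw [Finset.card_erase_of_mem hiT] at h1
      have h2 : (RB (s + 1)).card ≤ (RB s).card := Finset.card_le_card (hRBmono s)
      have h3 : 1 ≤ (RT s).card := Finset.card_pos.mpr ⟨i, hiT⟩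
      omega
    · have hnot : i ∉ RB (s + 1) := by
        simp only [hRBdef, Finset.mem_filter, not_and]
        intro _
        exact not_lt.mpr (key_bot s i hiR (Or.inr hic))
      have hsubB : RB (s + 1) ⊆ (RB s).erase i := fun j hj =>
        Finset.mem_erase.mpr ⟨fun he => hnot (he ▸ hj), hRBmono s hj⟩
      have h1 := Finset.card_le_card hsubB
      rw [Finset.card_erase_of_mem hiB] at h1
      have h2 : (RT (s + 1)).card ≤ (RT s).card := Finset.card_le_card (hRTmono s)
      have h3 : 1 ≤ (RB s).card := Finset.card_pos.mpr ⟨i, hiB⟩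
      omega
  have hcount : ∀ s : ℕ, s ≤ n → (∀ s' < s, (RT s').Nonempty ∧ (RB s').Nonempty) →
      (RT s).card + (RB s).card + s ≤ n := by
    intro s
    induction s with
    | zero =>
      intro _ _
      have hsubu : RT 0 ∪ RB 0 ⊆ R := by
        apply Finset.union_subset
        · intro i hi; simp only [hRTdef, Finset.mem_filter] at hi; exact hi.1
        · intro i hi; simp only [hRBdef, Finset.mem_filter] at hi; exact hi.1
      have := Finset.card_le_card hsubu
      rw [Finset.card_union_of_disjoint (hRTRBdisj 0)] at this
      simpa using this
    | succ s ih =>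
      intro hs hne
      have h1 := ih (by omega) (fun s' h => hne s' (by omega))
      have h2 := hdecr s (hne s (Nat.lt_succ_self s)).1 (hne s (Nat.lt_succ_self s)).2
      omega
  have hempty : ∃ s ≤ n, RT s = ∅ ∨ RB s = ∅ := by
    by_contra hcon
    push_neg at hcon
    have hne : ∀ s' < n, (RT s').Nonempty ∧ (RB s').Nonempty := fun s' h =>
      ⟨(hcon s' h.le).1,
        (hcon s' h.le).2⟩
    have hc1 := hcount n le_rfl hne
    have hc2 : (RT n).Nonempty := (hcon n le_rfl).1
    have := Finset.card_pos.mpr hc2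
    omega
  obtain ⟨s₀, hs₀, hcase⟩ := hempty
  have hηn : η ^ n ≤ η ^ s₀ := pow_le_pow_of_le_one hη.le hη1 hs₀
  have hfin1 : R.sup' hR (x (t + n)) ≤ M0 + (n : ℝ) * (L * σ) := by
    have h := hsup_iter 0 n
    rw [Nat.add_zero] at h
    exact h
  have hfin2 : m0 - (n : ℝ) * (L * σ) ≤ R.inf' hR (x (t + n)) := by
    have h := hinf_iter 0 n
    rw [Nat.add_zero] at h
    exact h
  have hmul : η ^ n * (M0 - m0) ≤ η ^ s₀ * (M0 - m0) := mul_le_mul_of_nonneg_right hηn hD0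
  rcases hcase with hT | hB'
  · have hallU : ∀ i ∈ R, x (t + s₀) i ≤ U s₀ := by
      intro i hi
      by_contra hc
      push_neg at hc
      have hmem : i ∈ RT s₀ := by
        simp only [hRTdef, Finset.mem_filter]; exact ⟨hi, hc⟩
      rw [hT] at hmem
      exact absurd hmem (Finset.notMem_empty i)
    have hsupU : R.sup' hR (x (t + s₀)) ≤ U s₀ := Finset.sup'_le _ _ hallU
    have h1 : R.sup' hR (x (t + n)) ≤ U s₀ + ((n - s₀ : ℕ) : ℝ) * (L * σ) := by
      have h := hsup_iter s₀ (n - s₀)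
      rw [show t + s₀ + (n - s₀) = t + n from by omega] at h
      linarith
    rw [Nat.cast_sub hs₀] at h1
    simp only [hUdef] at h1
    linarith [hfin2, h1, hmul]
  · have hallB : ∀ i ∈ R, B s₀ ≤ x (t + s₀) i := by
      intro i hi
      by_contra hc
      push_neg at hc
      have hmem : i ∈ RB s₀ := by
        simp only [hRBdef, Finset.mem_filter]; exact ⟨hi, hc⟩
      rw [hB'] at hmem
      exact absurd hmem (Finset.notMem_empty i)
    have hinfB : B s₀ ≤ R.inf' hR (x (t + s₀)) := Finset.le_inf' _ _ hallB
    have h1 : B s₀ - ((n - s₀ : ℕ) : ℝ) * (L * σ) ≤ R.inf' hR (x (t + n)) := by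
      have h := hinf_iter s₀ (n - s₀)
      rw [show t + s₀ + (n - s₀) = t + n from by omega] at h
      linarith
    rw [Nat.cast_sub hs₀] at h1
    simp only [hBdef] at h1
    linarith [hfin1, h1, hmul]
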